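/- Fix 0 < L < U with κ := U/L, let n ∈ ℕ, and let f_n : ℝⁿ → ℝ be the quadratic f_n(x) = (1/2) xᵀ P x + q̃ᵀ x, where q̃ = (L(κ−1)/4)·e₁ and P = (L(κ−1)/4)·Q̃ + L·I with Q̃ the circulant matrix whose rows are successive circular shifts of the first row (2, −1, 0, …, 0, −1). Let x⁽⁰⁾, x⁽¹⁾, …, x⁽ᵏ⁾ be any sequence in ℝⁿ with x⁽⁰⁾ = 0 and x⁽ʲ⁾ ∈ span{∇f_n(x⁽⁰⁾), …, ∇f_n(x⁽ʲ⁻¹⁾)} for all 1 ≤ j ≤ k. Then for every coordinate index l with k + 1 ≤ l ≤ n − k + 1, the l-th entry of x⁽ᵏ⁾ is zero. -/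

import Mathlib

open scoped Matrix
open scoped RealInnerProductSpace

/-- First row `(2, −1, 0, …, 0, −1)` of the circulant matrix `Q̃` (the `−1` entries at
positions `1` and `n−1` are added, so that the definition stays a genuine circulant for
every `n`). -/
noncomputable def circRow (n : ℕ) : Fin n → ℝ := fun i =>
  (if i.val = 0 then (2 : ℝ) else 0) + (if i.val = 1 then (-1 : ℝ) else 0) +
    (if i.val = n - 1 then (-1 : ℝ) else 0)

/-- The matrix `P = (L(κ−1)/4)·Q̃ + L·I`. -/
noncomputable def Pmat (L κ : ℝ) (n : ℕ) : Matrix (Fin n) (Fin n) ℝ :=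
  (L * (κ - 1) / 4) • Matrix.circulant (circRow n) + L • (1 : Matrix (Fin n) (Fin n) ℝ)

/-- The vector `q̃ = (L(κ−1)/4)·e₁`. -/
noncomputable def qtilde (L κ : ℝ) (n : ℕ) : EuclideanSpace ℝ (Fin n) := WithLp.toLp 2 fun (i : Fin n) =>
  if i.val = 0 then L * (κ - 1) / 4 else 0

/-- The quadratic `f_n(x) = ½ xᵀ P x + q̃ᵀ x`. -/
noncomputable def fQuad (L κ : ℝ) (n : ℕ) (x : EuclideanSpace ℝ (Fin n)) : ℝ :=
  (1 / 2) * ((fun i => x i) ⬝ᵥ (Pmat L κ n).mulVec fun i => x i) +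
    (fun i => qtilde L κ n i) ⬝ᵥ fun i => x i

lemma circRow_neg (n : ℕ) (i : Fin n) : circRow n (-i) = circRow n i := by
  have hlt : i.val < n := i.isLt
  have hv : (-i).val = (n - i.val) % n := by
    rw [Fin.neg_def]
  rcases Nat.eq_zero_or_pos i.val with h0 | hpos
  · have : (-i) = i := by ext; rw [hv, h0, Nat.sub_zero, Nat.mod_self]
    rw [this]
  · have hv' : (-i).val = n - i.val := by
      rw [hv, Nat.mod_eq_of_lt (by omega)]
    unfold circRow
    rw [hv']
    split_ifs <;> norm_num <;> omega

lemma Pmat_symm (L κ : ℝ) (n : ℕ) : (Pmat L κ n)ᵀ = Pmat L κ n := by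
  unfold Pmat
  rw [Matrix.transpose_add, Matrix.transpose_smul, Matrix.transpose_smul,
    Matrix.transpose_one, Matrix.Fin.transpose_circulant]
  have : (fun i => circRow n (-i)) = circRow n := funext (circRow_neg n)
  rw [this]

lemma Pmat_selfAdjoint (L κ : ℝ) (n : ℕ) :
    IsSelfAdjoint (Matrix.toEuclideanCLM (𝕜 := ℝ) (Pmat L κ n)) := by
  rw [IsSelfAdjoint, ← map_star]
  congr 1
  rw [Matrix.star_eq_conjTranspose, Matrix.conjTranspose_eq_transpose_of_trivial,
    Pmat_symm]

lemma fQuad_eq_inner (L κ : ℝ) (n : ℕ) (v : EuclideanSpace ℝ (Fin n)) :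
    fQuad L κ n v = (1 / 2 : ℝ) * ⟪v, (Matrix.toEuclideanCLM (𝕜 := ℝ) (Pmat L κ n)) v⟫
      + ⟪qtilde L κ n, v⟫ := by
  have hT : ∀ i, (Matrix.toEuclideanCLM (𝕜 := ℝ) (Pmat L κ n)) v i
      = (Pmat L κ n).mulVec (fun j => v j) i := fun i => rfl
  simp only [fQuad, PiLp.inner_apply, RCLike.inner_apply, conj_trivial, hT,
    dotProduct, mul_comm]

lemma symm_of_selfAdjoint {E : Type*} [NormedAddCommGroup E] [InnerProductSpace ℝ E]
    [CompleteSpace E] (T : E →L[ℝ] E) (hT : IsSelfAdjoint T) (v w : E) :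
    ⟪v, T w⟫ = ⟪T v, w⟫ := by
  conv_rhs => rw [← hT.adjoint_eq]
  rw [ContinuousLinearMap.adjoint_inner_left]

lemma grad_fQuad (L κ : ℝ) (n : ℕ) (y : EuclideanSpace ℝ (Fin n)) :
    gradient (fQuad L κ n) y
      = (Matrix.toEuclideanCLM (𝕜 := ℝ) (Pmat L κ n)) y + qtilde L κ n := by
  set T := Matrix.toEuclideanCLM (𝕜 := ℝ) (Pmat L κ n)
  set q := qtilde L κ n
  have hsym : ∀ v w : EuclideanSpace ℝ (Fin n), ⟪v, T w⟫ = ⟪T v, w⟫ :=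
    symm_of_selfAdjoint T (Pmat_selfAdjoint L κ n)
  have h1 : HasFDerivAt (fun x : EuclideanSpace ℝ (Fin n) => ⟪x, T x⟫)
      ((fderivInnerCLM ℝ (y, T y)).comp ((ContinuousLinearMap.id ℝ _).prod T)) y :=
    (hasFDerivAt_id y).inner ℝ T.hasFDerivAt
  have h2 : HasFDerivAt (fun x : EuclideanSpace ℝ (Fin n) => ⟪q, x⟫)
      (innerSL ℝ q) y := (innerSL ℝ q).hasFDerivAt
  have h3 := (h1.const_mul (1 / 2 : ℝ)).add h2
  have hfe : fQuad L κ n = fun x : EuclideanSpace ℝ (Fin n) =>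
      (1 / 2 : ℝ) * ⟪x, T x⟫ + ⟪q, x⟫ := funext (fQuad_eq_inner L κ n)
  rw [show ((fun y => (1 / 2 : ℝ) * ⟪y, T y⟫) + fun x => ⟪q, x⟫) = fQuad L κ n from hfe.symm] at h3
  have hD : ((1 / 2 : ℝ) • ((fderivInnerCLM ℝ (y, T y)).comp
        ((ContinuousLinearMap.id ℝ _).prod T)) + innerSL ℝ q)
      = InnerProductSpace.toDual ℝ (EuclideanSpace ℝ (Fin n)) (T y + q) := by
    apply ContinuousLinearMap.ext
    intro h
    simp only [ContinuousLinearMap.add_apply, ContinuousLinearMap.smul_apply,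
      ContinuousLinearMap.comp_apply, ContinuousLinearMap.prod_apply,
      ContinuousLinearMap.id_apply, fderivInnerCLM_apply, innerSL_apply_apply,
      InnerProductSpace.toDual_apply_apply, smul_eq_mul]
    rw [inner_add_left, hsym y h, real_inner_comm h (T y)]
    ring
  rw [hD] at h3
  exact (hasGradientAt_iff_hasFDerivAt.mpr h3).gradient

lemma grad_band (L κ : ℝ) (n m : ℕ) (y : EuclideanSpace ℝ (Fin n))
    (hy : ∀ l : Fin n, m ≤ l.val → l.val + m ≤ n → y l = 0) :
    ∀ l : Fin n, m + 1 ≤ l.val → l.val + m + 1 ≤ n →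
      gradient (fQuad L κ n) y l = 0 := by
  intro l hl1 hl2
  rw [grad_fQuad]
  have hq : qtilde L κ n l = 0 := by
    unfold qtilde; rw [PiLp.toLp_apply, if_neg]; omega
  have hadd : (Matrix.toEuclideanCLM (𝕜 := ℝ) (Pmat L κ n) y + qtilde L κ n) l
      = Matrix.toEuclideanCLM (𝕜 := ℝ) (Pmat L κ n) y l + qtilde L κ n l := rfl
  rw [hadd, hq, add_zero]
  have hT : Matrix.toEuclideanCLM (𝕜 := ℝ) (Pmat L κ n) y l
      = ∑ j, Pmat L κ n l j * y j := rfl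
  rw [hT]
  apply Finset.sum_eq_zero
  intro j _
  by_cases hyj : y j = 0
  · rw [hyj, mul_zero]
  · have hj : j.val < m ∨ n < j.val + m := by
      by_contra hc
      push_neg at hc
      exact hyj (hy j hc.1 hc.2)
    have hln : l.val < n := l.isLt
    have hjn : j.val < n := j.isLt
    have hd : (l - j).val = (n - j.val + l.val) % n := by rw [Fin.sub_def]
    have hd' : 2 ≤ (l - j).val ∧ (l - j).val + 2 ≤ n := by
      rcases le_or_gt j.val l.val with hle | hlt
      · have heq : n - j.val + l.val = (l.val - j.val) + n := by omega
        rw [hd, heq, Nat.add_mod_right, Nat.mod_eq_of_lt (by omega)]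
        omega
      · rw [hd, Nat.mod_eq_of_lt (by omega)]
        omega
    have hlj : l ≠ j := by
      intro h
      rw [h] at hl1 hl2
      omega
    have hP : Pmat L κ n l j = 0 := by
      simp only [Pmat, Matrix.add_apply, Matrix.smul_apply, Matrix.circulant_apply,
        Matrix.one_apply, if_neg hlj, smul_eq_mul, mul_zero, add_zero]
      have hc0 : circRow n (l - j) = 0 := by
        unfold circRow
        rw [if_neg (by omega), if_neg (by omega), if_neg (by omega)]
        ring
      rw [hc0, mul_zero]
    rw [hP, zero_mul]

/-- For FOM iterates on `f_n`, i.e. `x⁽⁰⁾ = 0` and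
`x⁽ʲ⁾ ∈ span{∇f_n(x⁽⁰⁾), …, ∇f_n(x⁽ʲ⁻¹⁾)}` for `1 ≤ j ≤ k`, every coordinate `l`
(one-indexed) with `k + 1 ≤ l ≤ n − k + 1` of `x⁽ᵏ⁾` vanishes. Zero-indexed
`l : Fin n`, the condition reads `k ≤ l.val` and `l.val + k ≤ n`. -/
theorem fom_iterates_sparse (L U : ℝ) (hL : 0 < L) (hLU : L < U)
    (κ : ℝ) (hκ : κ = U / L) (n k : ℕ)
    (x : ℕ → EuclideanSpace ℝ (Fin n)) (hx0 : x 0 = 0)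
    (hspan : ∀ j, 1 ≤ j → j ≤ k →
      x j ∈ Submodule.span ℝ {g | ∃ i < j, g = gradient (fQuad L κ n) (x i)}) :
    ∀ l : Fin n, k ≤ l.val → l.val + k ≤ n → x k l = 0 := by

  have key : ∀ j, j ≤ k → ∀ l : Fin n, j ≤ l.val → l.val + j ≤ n → x j l = 0 := by
    intro j
    induction j using Nat.strong_induction_on with
    | _ j ih =>
      intro hjk l hl1 hl2
      rcases Nat.eq_zero_or_pos j with rfl | hj
      · rw [hx0]; rfl
      · have hmem := hspan j hj hjk
        have hsub : {g | ∃ i < j, g = gradient (fQuad L κ n) (x i)}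
            ⊆ (LinearMap.ker (EuclideanSpace.projₗ (𝕜 := ℝ) l) : Set _) := by
          rintro g ⟨i, hij, rfl⟩
          rw [SetLike.mem_coe, LinearMap.mem_ker]
          show gradient (fQuad L κ n) (x i) l = 0
          exact grad_band L κ n i (x i)
            (ih i hij (le_trans (le_of_lt hij) hjk)) l (by omega) (by omega)
        have hmem2 : x j ∈ LinearMap.ker (EuclideanSpace.projₗ (𝕜 := ℝ) l) :=
          Submodule.span_le.mpr hsub hmem
        exact LinearMap.mem_ker.mp hmem2
  exact key k le_rfl
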